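/- Let A be an associative ring containing central elements t, α and elements q, p with p invertible, where α and t are central and commute with q, p (no commutation assumption between p and q is needed beyond pp⁻¹ = p⁻¹p = 1). Define H(Q, P, α) = P²/2 − QPQ − (t/2)P − αQ. Then H(q + αp⁻¹, p, −α) = H(q, p, α). -/

import Mathlib

/-- The quantum Bäcklund transformation `(q, p) ↦ (q + αp⁻¹, p)` preserves the symmetrically
ordered quantum P_II Hamiltonian `H(Q,P,α) = P²/2 − QPQ − (t/2)P − αQ` while flipping `α`. -/
theorem stmt13 {A : Type*} [Ring A] [Algebra ℚ A]
    (q p pinv t α : A)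
    (hp : p * pinv = 1) (hp' : pinv * p = 1)
    (htq : Commute t q) (htp : Commute t p)
    (hαq : Commute α q) (hαp : Commute α p) :
    let H : A → A → A → A := fun Q P β =>
      (1 / 2 : ℚ) • (P * P) - Q * P * Q - (1 / 2 : ℚ) • (t * P) - β * Q
    H (q + α * pinv) p (-α) = H q p α := by
  intro H
  have key : (q + α * pinv) * p * (q + α * pinv)
      = q * p * q + α * q + α * q + α * (α * pinv) := by
    have h1 : (q + α * pinv) * p = q * p + α := by
      rw [add_mul, mul_assoc, hp', mul_one]
    rw [h1, add_mul, mul_add, mul_add]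
    have h2 : q * p * (α * pinv) = α * q := by
      rw [← mul_assoc, mul_assoc q p α, ← hαp.eq, ← mul_assoc, mul_assoc, hp, mul_one,
        ← hαq.eq]
    rw [h2]
    abel
  show (1 / 2 : ℚ) • (p * p) - (q + α * pinv) * p * (q + α * pinv) - (1 / 2 : ℚ) • (t * p)
      - (-α) * (q + α * pinv) = (1 / 2 : ℚ) • (p * p) - q * p * q - (1 / 2 : ℚ) • (t * p) - α * q
  rw [key, neg_mul, mul_add]
  abel
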